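/- For any real ν_x, ν_y not both zero, the 6×6 matrix ν_x·A_x + ν_y·B_y has eigenvalues 0 (with eigenspace of dimension 2), ±(2/(7√3))·sqrt(ν_x²+ν_y²), and ±(1/7)·sqrt(ν_x²+ν_y²), all real; hence the system ∂_t S + A_x ∂_x S + B_y ∂_y S = 0 is hyperbolic. -/

import Mathlib

open Matrix

/-- The 6×6 matrix `A_x`. -/
noncomputable def Ax : Matrix (Fin 6) (Fin 6) ℝ :=
  !![0, 0, 0, 1/3 - 3/7, 0, 0;
     0, 0, 0, 1/3 - 1/7, 0, 0;
     0, 0, 0, 1/3 - 3/7, 0, 0;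
     0, 1/7, 0, 0, 0, 0;
     0, 0, 0, 0, 0, -1/7;
     0, 0, 0, 0, -1/7, 0]

/-- The 6×6 matrix `B_y`. -/
noncomputable def By : Matrix (Fin 6) (Fin 6) ℝ :=
  !![0, 0, 0, 0, 1/3 - 1/7, 0;
     0, 0, 0, 0, 1/3 - 3/7, 0;
     0, 0, 0, 0, 1/3 - 3/7, 0;
     0, 0, 0, 0, 0, -1/7;
     1/7, 0, 0, 0, 0, 0;
     0, 0, 0, -1/7, 0, 0]

section AuxLemmas

@[simp] lemma cv_2_1 {α : Type*} (x : α) (u : Fin 1 → α) : Matrix.vecCons x u (1 : Fin 2) = u 0 := rfl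
@[simp] lemma cv_3_1 {α : Type*} (x : α) (u : Fin 2 → α) : Matrix.vecCons x u (1 : Fin 3) = u 0 := rfl
@[simp] lemma cv_3_2 {α : Type*} (x : α) (u : Fin 2 → α) : Matrix.vecCons x u (2 : Fin 3) = u 1 := rfl
@[simp] lemma cv_4_1 {α : Type*} (x : α) (u : Fin 3 → α) : Matrix.vecCons x u (1 : Fin 4) = u 0 := rfl
@[simp] lemma cv_4_2 {α : Type*} (x : α) (u : Fin 3 → α) : Matrix.vecCons x u (2 : Fin 4) = u 1 := rfl
@[simp] lemma cv_4_3 {α : Type*} (x : α) (u : Fin 3 → α) : Matrix.vecCons x u (3 : Fin 4) = u 2 := rfl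
@[simp] lemma cv_5_1 {α : Type*} (x : α) (u : Fin 4 → α) : Matrix.vecCons x u (1 : Fin 5) = u 0 := rfl
@[simp] lemma cv_5_2 {α : Type*} (x : α) (u : Fin 4 → α) : Matrix.vecCons x u (2 : Fin 5) = u 1 := rfl
@[simp] lemma cv_5_3 {α : Type*} (x : α) (u : Fin 4 → α) : Matrix.vecCons x u (3 : Fin 5) = u 2 := rfl
@[simp] lemma cv_5_4 {α : Type*} (x : α) (u : Fin 4 → α) : Matrix.vecCons x u (4 : Fin 5) = u 3 := rfl
@[simp] lemma cv_6_1 {α : Type*} (x : α) (u : Fin 5 → α) : Matrix.vecCons x u (1 : Fin 6) = u 0 := rfl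
@[simp] lemma cv_6_2 {α : Type*} (x : α) (u : Fin 5 → α) : Matrix.vecCons x u (2 : Fin 6) = u 1 := rfl
@[simp] lemma cv_6_3 {α : Type*} (x : α) (u : Fin 5 → α) : Matrix.vecCons x u (3 : Fin 6) = u 2 := rfl
@[simp] lemma cv_6_4 {α : Type*} (x : α) (u : Fin 5 → α) : Matrix.vecCons x u (4 : Fin 6) = u 3 := rfl
@[simp] lemma cv_6_5 {α : Type*} (x : α) (u : Fin 5 → α) : Matrix.vecCons x u (5 : Fin 6) = u 4 := rfl


open Polynomial in
lemma eval_charpoly6 (N : Matrix (Fin 6) (Fin 6) ℂ) (μ : ℂ) :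
    N.charpoly.eval μ = (μ • (1 : Matrix (Fin 6) (Fin 6) ℂ) - N).det := by
  rw [Matrix.charpoly,
    show Polynomial.eval μ (charmatrix N).det = (Polynomial.evalRingHom μ) (charmatrix N).det from rfl,
    RingHom.map_det]
  congr 1
  ext i j
  by_cases h : i = j <;>
    simp [h, charmatrix_apply_eq, charmatrix_apply_ne, Matrix.one_apply]

set_option maxRecDepth 20000 in
set_option maxHeartbeats 2000000 in
lemma det6 (x y μ : ℂ) :
    (!![μ, 0, 0, -(x*(-2/21)), -(y*(4/21)), 0;
       0, μ, 0, -(x*(4/21)), -(y*(-2/21)), 0;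
       0, 0, μ, -(x*(-2/21)), -(y*(-2/21)), 0;
       0, -(x/7), 0, μ, 0, y/7;
       -(y/7), 0, 0, 0, μ, x/7;
       0, 0, 0, y/7, x/7, μ] : Matrix (Fin 6) (Fin 6) ℂ).det
    = μ^2 * (μ^2 - (4/147)*(x^2+y^2)) * (μ^2 - (1/49)*(x^2+y^2)) := by
  simp [Matrix.det_succ_row_zero, Fin.sum_univ_succ]
  norm_num [Fin.succAbove, Fin.lt_def]
  simp only [show Fin.castSucc (2:Fin 5) = (2:Fin 6) from rfl,
    show Fin.castSucc (2:Fin 4) = (2:Fin 5) from rfl,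
    show Fin.castSucc (2:Fin 3) = (2:Fin 4) from rfl,
    show Fin.castSucc (Fin.succ (2:Fin 4)) = (3:Fin 6) from rfl,
    show Fin.castSucc (Fin.castSucc (2:Fin 4)) = (2:Fin 6) from rfl,
    show Fin.castSucc (3:Fin 5) = (3:Fin 6) from rfl]
  norm_num
  ring

set_option maxHeartbeats 1000000 in
lemma charmat_eq (νx νy : ℝ) (μ : ℂ) :
    μ • (1 : Matrix (Fin 6) (Fin 6) ℂ) - ((νx • Ax + νy • By).map (Complex.ofReal)) =
    !![μ, 0, 0, -((νx:ℂ)*(-2/21)), -((νy:ℂ)*(4/21)), 0;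
       0, μ, 0, -((νx:ℂ)*(4/21)), -((νy:ℂ)*(-2/21)), 0;
       0, 0, μ, -((νx:ℂ)*(-2/21)), -((νy:ℂ)*(-2/21)), 0;
       0, -((νx:ℂ)/7), 0, μ, 0, (νy:ℂ)/7;
       -((νy:ℂ)/7), 0, 0, 0, μ, (νx:ℂ)/7;
       0, 0, 0, (νy:ℂ)/7, (νx:ℂ)/7, μ] := by
  ext i j
  fin_cases i <;> fin_cases j <;>
    simp [Ax, By, Matrix.one_apply, Matrix.vecHead, Matrix.vecTail] <;>
    try (push_cast; ring)
  all_goals tauto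

end AuxLemmas

set_option maxHeartbeats 1000000 in
/-- For `(ν_x, ν_y) ≠ 0`, the matrix `ν_x A_x + ν_y B_y` has real eigenvalues
`0` (with eigenspace of dimension 2), `±(2/(7√3))·√(ν_x²+ν_y²)` and
`±(1/7)·√(ν_x²+ν_y²)`: the system is hyperbolic. -/
theorem AxBy_hyperbolic (νx νy : ℝ) (hν : (νx, νy) ≠ 0) :
    (∀ μ : ℂ, ((νx • Ax + νy • By).map (Complex.ofReal)).charpoly.IsRoot μ ↔
      μ = 0 ∨
      μ = ((2 / (7 * Real.sqrt 3) * Real.sqrt (νx ^ 2 + νy ^ 2) : ℝ) : ℂ) ∨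
      μ = ((-(2 / (7 * Real.sqrt 3)) * Real.sqrt (νx ^ 2 + νy ^ 2) : ℝ) : ℂ) ∨
      μ = (((1 / 7) * Real.sqrt (νx ^ 2 + νy ^ 2) : ℝ) : ℂ) ∨
      μ = ((-(1 / 7) * Real.sqrt (νx ^ 2 + νy ^ 2) : ℝ) : ℂ)) ∧
    Module.finrank ℝ (LinearMap.ker (Matrix.toLin' (νx • Ax + νy • By))) = 2 := by
  have hcase : νx ≠ 0 ∨ νy ≠ 0 := by
    by_contra h
    push_neg at h
    exact hν (by simp [Prod.ext_iff, h.1, h.2])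
  have hr2 : (0:ℝ) < νx ^ 2 + νy ^ 2 := by
    rcases hcase with h | h <;> positivity
  set s : ℝ := 2 / (7 * Real.sqrt 3) * Real.sqrt (νx ^ 2 + νy ^ 2) with hs_def
  set t : ℝ := 1 / 7 * Real.sqrt (νx ^ 2 + νy ^ 2) with ht_def
  have hs2 : ((s:ℂ))^2 = (4/147) * ((νx:ℂ)^2 + (νy:ℂ)^2) := by
    have h1 : s ^ 2 = (4/147) * (νx ^ 2 + νy ^ 2) := by
      have h3 : Real.sqrt 3 ^ 2 = 3 := Real.sq_sqrt (by norm_num)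
      have hr : Real.sqrt (νx ^ 2 + νy ^ 2) ^ 2 = νx ^ 2 + νy ^ 2 :=
        Real.sq_sqrt hr2.le
      have h3ne : Real.sqrt 3 ≠ 0 := by
        intro h; rw [h] at h3; norm_num at h3
      rw [hs_def]
      field_simp
      nlinarith [h3, hr]
    calc ((s:ℂ))^2 = ((s^2 : ℝ) : ℂ) := by push_cast; ring
    _ = (4/147) * ((νx:ℂ)^2 + (νy:ℂ)^2) := by rw [h1]; push_cast; ring
  have ht2 : ((t:ℂ))^2 = (1/49) * ((νx:ℂ)^2 + (νy:ℂ)^2) := by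
    have h1 : t ^ 2 = (1/49) * (νx ^ 2 + νy ^ 2) := by
      have hr : Real.sqrt (νx ^ 2 + νy ^ 2) ^ 2 = νx ^ 2 + νy ^ 2 :=
        Real.sq_sqrt hr2.le
      rw [ht_def]; nlinarith [hr]
    calc ((t:ℂ))^2 = ((t^2 : ℝ) : ℂ) := by push_cast; ring
    _ = (1/49) * ((νx:ℂ)^2 + (νy:ℂ)^2) := by rw [h1]; push_cast; ring
  constructor
  · intro μ
    have hfact : ((νx • Ax + νy • By).map (Complex.ofReal)).charpoly.eval μ =
        μ^2 * ((μ - (s:ℂ)) * (μ + (s:ℂ))) * ((μ - (t:ℂ)) * (μ + (t:ℂ))) := by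
      rw [eval_charpoly6, charmat_eq, det6, ← hs2, ← ht2]; ring
    have hfive : (((νx • Ax + νy • By).map (Complex.ofReal)).charpoly.IsRoot μ) ↔
        (μ = 0 ∨ (μ = (s:ℂ) ∨ μ = -(s:ℂ)) ∨ (μ = (t:ℂ) ∨ μ = -(t:ℂ))) := by
      rw [Polynomial.IsRoot, hfact]
      constructor
      · intro h
        rcases mul_eq_zero.mp h with h | h
        · rcases mul_eq_zero.mp h with h | h
          · exact Or.inl (pow_eq_zero_iff two_ne_zero |>.mp h)
          · rcases mul_eq_zero.mp h with h | h
            · exact Or.inr (Or.inl (Or.inl (sub_eq_zero.mp h)))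
            · exact Or.inr (Or.inl (Or.inr (eq_neg_of_add_eq_zero_left h)))
        · rcases mul_eq_zero.mp h with h | h
          · exact Or.inr (Or.inr (Or.inl (sub_eq_zero.mp h)))
          · exact Or.inr (Or.inr (Or.inr (eq_neg_of_add_eq_zero_left h)))
      · rintro (rfl | (rfl | rfl) | (rfl | rfl)) <;> ring
    rw [hfive]
    have e1 : ((-(2 / (7 * Real.sqrt 3)) * Real.sqrt (νx ^ 2 + νy ^ 2) : ℝ) : ℂ) = -(s:ℂ) := by
      rw [hs_def]; push_cast; ring
    have e2 : ((-(1 / 7) * Real.sqrt (νx ^ 2 + νy ^ 2) : ℝ) : ℂ) = -(t:ℂ) := by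
      rw [ht_def]; push_cast; ring
    rw [e1, e2, hs_def, ht_def]
    push_cast
    tauto
  · -- kernel dimension
    set w : Fin 6 → ℝ := ![νx^2, νy^2, 0, 0, 0, νx*νy] with hw_def
    set e3 : Fin 6 → ℝ := ![0, 0, 1, 0, 0, 0] with he3_def
    have hker : LinearMap.ker (Matrix.toLin' (νx • Ax + νy • By)) =
        Submodule.span ℝ (Set.range ![e3, w]) := by
      have hrange : Set.range ![e3, w] = {e3, w} := by
        ext u
        simp [Fin.exists_fin_two]
        tauto
      rw [hrange]
      apply le_antisymm
      · intro v hv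
        rw [LinearMap.mem_ker, Matrix.toLin'_apply] at hv
        have h0 := congrFun hv 0
        have h1 := congrFun hv 1
        have h3 := congrFun hv 3
        have h4 := congrFun hv 4
        have h5 := congrFun hv 5
        simp [Ax, By, Matrix.mulVec, dotProduct, Fin.sum_univ_six] at h0 h1 h3 h4 h5
        -- derived clean equations
        have hA : νx * v 3 = 0 := by linear_combination (7/2) * h0 + 7 * h1
        have hB : νy * v 4 = 0 := by linear_combination 7 * h0 + (7/2) * h1
        have h6 : νy * v 3 + νx * v 4 = 0 := by linear_combination (-7) * h5
        have hP : νx * v 1 = νy * v 5 := by linear_combination 7 * h3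
        have hQ : νy * v 0 = νx * v 5 := by linear_combination 7 * h4
        have hv3 : v 3 = 0 := by
          have hz : (νx^2 + νy^2) * v 3 = 0 := by
            linear_combination νx * hA + νy * h6 - νx * hB
          rcases mul_eq_zero.mp hz with h | h
          · exact absurd h hr2.ne'
          · exact h
        have hv4 : v 4 = 0 := by
          have hz : (νx^2 + νy^2) * v 4 = 0 := by
            linear_combination νy * hB + νx * h6 - νy * hA
          rcases mul_eq_zero.mp hz with h | h
          · exact absurd h hr2.ne'
          · exact h
        rw [Submodule.mem_span_pair]
        refine ⟨v 2, (v 0 + v 1) / (νx^2 + νy^2), ?_⟩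
        funext i
        fin_cases i <;>
          simp [he3_def, hw_def, Matrix.vecHead, Matrix.vecTail] <;>
          try rw [div_mul_eq_mul_div, div_eq_iff hr2.ne']
        all_goals first
          | linear_combination νx * hP - νy * hQ
          | linear_combination νy * hQ - νx * hP
          | linear_combination νx * hQ + νy * hP
          | exact hv3.symm
          | exact hv4.symm
          | simp
      · rw [Submodule.span_le]
        rintro u (rfl | rfl)
        · rw [SetLike.mem_coe, LinearMap.mem_ker, Matrix.toLin'_apply]
          funext i
          fin_cases i <;>
            simp [Ax, By, he3_def, Matrix.mulVec, dotProduct, Fin.sum_univ_six]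
        · rw [SetLike.mem_coe, LinearMap.mem_ker, Matrix.toLin'_apply]
          funext i
          fin_cases i <;>
            simp [Ax, By, hw_def, Matrix.mulVec, dotProduct, Fin.sum_univ_six] <;>
            ring
    have hli : LinearIndependent ℝ ![e3, w] := by
      rw [LinearIndependent.pair_iff]
      intro a b hab
      have g2 := congrFun hab 2
      have g0 := congrFun hab 0
      have g1 := congrFun hab 1
      simp [he3_def, hw_def, Matrix.vecHead, Matrix.vecTail] at g0 g1 g2
      constructor
      · simpa using g2
      · rcases hcase with h | h
        · rcases g0 with hb | hb
          · exact hb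
          · exact absurd hb h
        · rcases g1 with hb | hb
          · exact hb
          · exact absurd hb h
    rw [hker, finrank_span_eq_card hli]
    simp
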